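/- Let H be a nonempty compact convex subset of the plane ℝ² = ℝ × ℝ, let F = {P ∈ ℝ² : infDist(P, H) = 1} (the boundary of the parallel body of H at distance 1), and let S(H) ⊆ (ℝ × ℝ) × (ℝ × ℝ) be the slide curve of H. Then there exists a bijection Φ : F → S(H) such that for every P ∈ F, writing Φ(P) = (P*, u): P* ∈ H, dist(P, P*) = 1, and u = rot90(P − P*) where rot90(a, b) = (−b, a); moreover both Φ and its inverse are Lipschitz in the small: there exist δ > 0 and L ≥ 0 such that dist(Φ(P), Φ(Q)) ≤ L·dist(P, Q) whenever P, Q ∈ F with dist(P, Q) ≤ δ, and dist(Φ⁻¹(s), Φ⁻¹(s')) ≤ L·dist(s, s') whenever s, s' ∈ S(H) with dist(s, s') ≤ δ. -/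

import Mathlib

open Set

/-- The cross product of two planar vectors. -/
noncomputable def cross (u w : ℝ × ℝ) : ℝ := u.1 * w.2 - u.2 * w.1

/-- `(P, u)` is a pointed supporting line of `H`: `P ∈ H`, `u` is a Euclidean unit
vector, and `H` lies on the left of the directed line through `P` with direction `u`. -/
def IsPointedSupportingLine (H : Set (ℝ × ℝ)) (P u : ℝ × ℝ) : Prop :=
  P ∈ H ∧ u.1 ^ 2 + u.2 ^ 2 = 1 ∧ ∀ Q ∈ H, 0 ≤ cross u (Q - P)

/-- The slide curve of `H`: the set of its pointed supporting lines. -/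
def slideCurve (H : Set (ℝ × ℝ)) : Set ((ℝ × ℝ) × (ℝ × ℝ)) :=
  {Pu | IsPointedSupportingLine H Pu.1 Pu.2}

/-- The Euclidean distance on `ℝ × ℝ`. -/
noncomputable def edist2 (p q : ℝ × ℝ) : ℝ :=
  Real.sqrt ((p.1 - q.1) ^ 2 + (p.2 - q.2) ^ 2)

/-- The Euclidean infimum distance from a point to a set in `ℝ × ℝ`. -/
noncomputable def einfDist (p : ℝ × ℝ) (H : Set (ℝ × ℝ)) : ℝ :=
  sInf (Set.image (edist2 p) H)

/-- Counterclockwise rotation of a planar vector by 90 degrees. -/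
def rot90 (w : ℝ × ℝ) : ℝ × ℝ := (-w.2, w.1)

lemma edist2_nonneg' (p q : ℝ × ℝ) : 0 ≤ edist2 p q := Real.sqrt_nonneg _

lemma abs_fst_le_edist2 (p q : ℝ × ℝ) : |p.1 - q.1| ≤ edist2 p q := by
  rw [edist2, ← Real.sqrt_sq_eq_abs]
  exact Real.sqrt_le_sqrt (by nlinarith [sq_nonneg (p.2 - q.2)])

lemma abs_snd_le_edist2 (p q : ℝ × ℝ) : |p.2 - q.2| ≤ edist2 p q := by
  rw [edist2, ← Real.sqrt_sq_eq_abs]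
  exact Real.sqrt_le_sqrt (by nlinarith [sq_nonneg (p.1 - q.1)])

lemma dist_le_edist2 (p q : ℝ × ℝ) : dist p q ≤ edist2 p q := by
  rw [Prod.dist_eq, Real.dist_eq, Real.dist_eq]
  exact max_le (abs_fst_le_edist2 p q) (abs_snd_le_edist2 p q)

lemma edist2_le_of_sq_le {p q : ℝ × ℝ} {c : ℝ} (hc : 0 ≤ c)
    (h : (p.1 - q.1) ^ 2 + (p.2 - q.2) ^ 2 ≤ c ^ 2) : edist2 p q ≤ c := by
  rw [edist2]
  calc Real.sqrt ((p.1 - q.1) ^ 2 + (p.2 - q.2) ^ 2) ≤ Real.sqrt (c ^ 2) :=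
        Real.sqrt_le_sqrt h
    _ = c := by rw [Real.sqrt_sq hc]

lemma sq_edist2 {p q : ℝ × ℝ} {c : ℝ} (hc : 0 ≤ c) (h : edist2 p q = c) :
    (p.1 - q.1) ^ 2 + (p.2 - q.2) ^ 2 = c ^ 2 := by
  rw [edist2] at h
  rw [← h, Real.sq_sqrt (by positivity)]

lemma continuous_edist2 (p : ℝ × ℝ) : Continuous (edist2 p) := by
  unfold edist2; fun_prop

lemma proj_spec (H : Set (ℝ × ℝ)) (hne : H.Nonempty) (hcomp : IsCompact H)
    (hconv : Convex ℝ H) (P : ℝ × ℝ) :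
    ∃ Q ∈ H, edist2 P Q = einfDist P H ∧
      ∀ W ∈ H, (P.1 - Q.1) * (W.1 - Q.1) + (P.2 - Q.2) * (W.2 - Q.2) ≤ 0 := by
  obtain ⟨Q, hQ, hmin⟩ := hcomp.exists_isMinOn hne (continuous_edist2 P).continuousOn
  refine ⟨Q, hQ, ?_, ?_⟩
  · refine le_antisymm ?_ (csInf_le ⟨0, ?_⟩ ⟨Q, hQ, rfl⟩)
    · exact le_csInf (hne.image _) (by rintro b ⟨W, hW, rfl⟩; exact hmin hW)
    · rintro b ⟨W, hW, rfl⟩; exact Real.sqrt_nonneg _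
  · intro W hW
    by_contra hc
    push_neg at hc
    set c : ℝ := (P.1 - Q.1) * (W.1 - Q.1) + (P.2 - Q.2) * (W.2 - Q.2) with hcdef
    set s : ℝ := (W.1 - Q.1) ^ 2 + (W.2 - Q.2) ^ 2 with hsdef
    have hs : 0 < s := by
      rcases lt_or_eq_of_le (by positivity : (0:ℝ) ≤ s) with h | h
      · exact h
      · exfalso
        have h1 : (W.1 - Q.1) = 0 ∧ (W.2 - Q.2) = 0 := by
          constructor <;> nlinarith [sq_nonneg (W.1 - Q.1), sq_nonneg (W.2 - Q.2)]
        rw [hcdef, h1.1, h1.2] at hc; simp at hc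
    set t : ℝ := min 1 (c / s) with htdef
    have ht0 : 0 < t := lt_min one_pos (div_pos hc hs)
    have ht1 : t ≤ 1 := min_le_left _ _
    have hts : t * s ≤ c := by
      have := min_le_right 1 (c / s)
      calc t * s ≤ (c / s) * s := by nlinarith
        _ = c := by field_simp
    set R : ℝ × ℝ := ((1 - t) * Q.1 + t * W.1, (1 - t) * Q.2 + t * W.2) with hRdef
    have hR : R ∈ H := by
      have := hconv hQ hW (by linarith : (0:ℝ) ≤ 1 - t) (le_of_lt ht0) (by ring)
      convert this using 1
      rw [hRdef]; ext <;> simp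
    have hlt : edist2 P R < edist2 P Q := by
      rw [edist2, edist2]
      apply Real.sqrt_lt_sqrt (by positivity)
      have : (P.1 - R.1) = (P.1 - Q.1) - t * (W.1 - Q.1) ∧
          (P.2 - R.2) = (P.2 - Q.2) - t * (W.2 - Q.2) := by
        constructor <;> (simp [hRdef]; ring)
      rw [this.1, this.2]
      nlinarith [mul_pos ht0 hc, mul_le_mul_of_nonneg_left hts ht0.le, hcdef, hsdef]
    exact absurd (hmin hR) (not_le.mpr hlt)

lemma proj_unique {H : Set (ℝ × ℝ)} {P A B : ℝ × ℝ} (hA : A ∈ H) (hB : B ∈ H)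
    (chA : ∀ W ∈ H, (P.1 - A.1) * (W.1 - A.1) + (P.2 - A.2) * (W.2 - A.2) ≤ 0)
    (chB : ∀ W ∈ H, (P.1 - B.1) * (W.1 - B.1) + (P.2 - B.2) * (W.2 - B.2) ≤ 0) :
    A = B := by
  have h1 := chA B hB
  have h2 := chB A hA
  have key : (A.1 - B.1) ^ 2 + (A.2 - B.2) ^ 2 ≤ 0 := by nlinarith
  have e1 : A.1 = B.1 := by nlinarith [sq_nonneg (A.1 - B.1), sq_nonneg (A.2 - B.2)]
  have e2 : A.2 = B.2 := by nlinarith [sq_nonneg (A.1 - B.1), sq_nonneg (A.2 - B.2)]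
  exact Prod.ext e1 e2


/-- For a nonempty compact convex `H ⊆ ℝ²`, there is a bijection `Φ` from
`F = {P : infDist(P, H) = 1}` (the boundary of the parallel body of `H`) onto the
slide curve `S(H)`, sending `P` to `(P*, u)` where `P* ∈ H` is at distance `1` from
`P` and `u = rot90(P − P*)`; moreover both `Φ` and its inverse are Lipschitz in the
small. (The slide curve carries the product metric of `ℝ² × ℝ²`, which is
bi-Lipschitz equivalent to the Euclidean metric of `ℝ⁴`.) -/
theorem parallel_body_boundary_biLipschitz_slideCurve
    (H : Set (ℝ × ℝ)) (hne : H.Nonempty) (hcomp : IsCompact H) (hconv : Convex ℝ H)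
    (F : Set (ℝ × ℝ)) (hF : F = {P : ℝ × ℝ | einfDist P H = 1}) :
    ∃ Φ : ℝ × ℝ → (ℝ × ℝ) × (ℝ × ℝ),
      Set.BijOn Φ F (slideCurve H) ∧
      (∀ P ∈ F, (Φ P).1 ∈ H ∧ edist2 P (Φ P).1 = 1 ∧ (Φ P).2 = rot90 (P - (Φ P).1)) ∧
      ∃ δ : ℝ, 0 < δ ∧ ∃ L : ℝ, 0 ≤ L ∧
        (∀ P ∈ F, ∀ Q ∈ F, edist2 P Q ≤ δ → dist (Φ P) (Φ Q) ≤ L * edist2 P Q) ∧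
        ∃ Ψ : (ℝ × ℝ) × (ℝ × ℝ) → ℝ × ℝ,
          Set.InvOn Ψ Φ F (slideCurve H) ∧
          ∀ s ∈ slideCurve H, ∀ s' ∈ slideCurve H,
            dist s s' ≤ δ → edist2 (Ψ s) (Ψ s') ≤ L * dist s s' := by
  classical
  have spec := proj_spec H hne hcomp hconv
  set prj : ℝ × ℝ → ℝ × ℝ := fun P => (spec P).choose with hprjdef
  have hprj_mem : ∀ P, prj P ∈ H := fun P => (spec P).choose_spec.1
  have hprj_dist : ∀ P, edist2 P (prj P) = einfDist P H := fun P =>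
    (spec P).choose_spec.2.1
  have hprj_char : ∀ P, ∀ W ∈ H,
      (P.1 - (prj P).1) * (W.1 - (prj P).1) + (P.2 - (prj P).2) * (W.2 - (prj P).2) ≤ 0 :=
    fun P => (spec P).choose_spec.2.2
  set Φ : ℝ × ℝ → (ℝ × ℝ) × (ℝ × ℝ) := fun P => (prj P, rot90 (P - prj P)) with hΦdef
  set Ψ : (ℝ × ℝ) × (ℝ × ℝ) → ℝ × ℝ := fun s => (s.1.1 + s.2.2, s.1.2 - s.2.1) with hΨdef
  -- P ∈ F facts
  have hFdist : ∀ P ∈ F, edist2 P (prj P) = 1 := by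
    intro P hP
    rw [hprj_dist P]
    rw [hF] at hP
    exact hP
  have hFsq : ∀ P ∈ F, (P.1 - (prj P).1) ^ 2 + (P.2 - (prj P).2) ^ 2 = 1 := by
    intro P hP
    have := sq_edist2 (c := 1) one_pos.le (hFdist P hP)
    simpa using this
  -- maps to
  have hmaps : ∀ P ∈ F, Φ P ∈ slideCurve H := by
    intro P hP
    refine ⟨hprj_mem P, ?_, ?_⟩
    · show (rot90 (P - prj P)).1 ^ 2 + (rot90 (P - prj P)).2 ^ 2 = 1
      have := hFsq P hP
      simp only [rot90, Prod.fst_sub, Prod.snd_sub]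
      nlinarith
    · intro Q hQ
      have := hprj_char P Q hQ
      simp only [cross, hΦdef, rot90, Prod.fst_sub, Prod.snd_sub]
      nlinarith
  -- left inverse
  have hleft : ∀ P ∈ F, Ψ (Φ P) = P := by
    intro P hP
    simp only [hΦdef, hΨdef, rot90, Prod.fst_sub, Prod.snd_sub]
    exact Prod.ext (by ring) (by ring)
  -- surjectivity data
  have hsurj : ∀ s ∈ slideCurve H, Ψ s ∈ F ∧ Φ (Ψ s) = s := by
    rintro ⟨P, u⟩ ⟨hPH, hu, hcr⟩
    simp only at hPH hu hcr
    set X : ℝ × ℝ := (P.1 + u.2, P.2 - u.1) with hXdef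
    have hXP : edist2 X P = 1 := by
      rw [edist2]
      simp only [hXdef]
      rw [show (P.1 + u.2 - P.1) ^ 2 + (P.2 - u.1 - P.2) ^ 2 = 1 by nlinarith]
      exact Real.sqrt_one
    have hlow : ∀ W ∈ H, 1 ≤ edist2 X W := by
      intro W hW
      have hc := hcr W hW
      rw [cross] at hc
      simp only [Prod.fst_sub, Prod.snd_sub] at hc
      rw [edist2, show (1:ℝ) = Real.sqrt 1 from Real.sqrt_one.symm]
      apply Real.sqrt_le_sqrt
      simp only [hXdef]
      nlinarith [sq_nonneg (P.1 - W.1), sq_nonneg (P.2 - W.2)]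
    have hXF : einfDist X H = 1 := by
      refine le_antisymm ?_ (le_csInf (hne.image _) ?_)
      · calc sInf (Set.image (edist2 X) H) ≤ edist2 X P :=
              csInf_le ⟨0, by rintro b ⟨W, hW, rfl⟩; exact edist2_nonneg' _ _⟩ ⟨P, hPH, rfl⟩
          _ = 1 := hXP
      · rintro b ⟨W, hW, rfl⟩; exact hlow W hW
    have hXmem : X ∈ F := by rw [hF]; exact hXF
    have hPchar : ∀ W ∈ H,
        (X.1 - P.1) * (W.1 - P.1) + (X.2 - P.2) * (W.2 - P.2) ≤ 0 := by
      intro W hW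
      have hc := hcr W hW
      rw [cross] at hc
      simp only [Prod.fst_sub, Prod.snd_sub] at hc
      simp only [hXdef]
      nlinarith
    have hprjX : prj X = P := proj_unique (hprj_mem X) hPH (hprj_char X) hPchar
    have hΨs : Ψ (P, u) = X := rfl
    refine ⟨by rw [hΨs]; exact hXmem, ?_⟩
    rw [hΨs]
    simp only [hΦdef, hprjX]
    refine Prod.ext rfl ?_
    show rot90 (X - P) = u
    simp only [rot90, hXdef, Prod.fst_sub, Prod.snd_sub]
    refine Prod.ext ?_ ?_ <;> ring
  -- projection is 1-Lipschitz on F (in fact everywhere)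
  have hprj_lip : ∀ P Q : ℝ × ℝ, edist2 (prj P) (prj Q) ≤ edist2 P Q := by
    intro P Q
    have h1 := hprj_char P (prj Q) (hprj_mem Q)
    have h2 := hprj_char Q (prj P) (hprj_mem P)
    apply edist2_le_of_sq_le (edist2_nonneg' P Q)
    rw [← sq_edist2 (edist2_nonneg' P Q) rfl]
    nlinarith [sq_nonneg ((P.1 - Q.1) * ((prj P).2 - (prj Q).2)
        - (P.2 - Q.2) * ((prj P).1 - (prj Q).1)),
      sq_nonneg (((prj P).1 - (prj Q).1) ^ 2 + ((prj P).2 - (prj Q).2) ^ 2),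
      sq_nonneg (P.1 - Q.1), sq_nonneg (P.2 - Q.2)]
  refine ⟨Φ, ⟨fun P hP => hmaps P hP, ?_, ?_⟩, ?_, 1, one_pos, 3, by norm_num, ?_, Ψ, ⟨?_, ?_⟩, ?_⟩
  · -- InjOn
    intro P hP Q hQ hPQ
    rw [← hleft P hP, ← hleft Q hQ, hPQ]
  · -- SurjOn
    intro s hs
    exact ⟨Ψ s, (hsurj s hs).1, (hsurj s hs).2⟩
  · -- pointwise description
    intro P hP
    exact ⟨hprj_mem P, hFdist P hP, rfl⟩
  · -- Φ Lipschitz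
    intro P hP Q hQ _
    have hp := hprj_lip P Q
    have h0 := edist2_nonneg' P Q
    rw [Prod.dist_eq]
    apply max_le
    · calc dist (Φ P).1 (Φ Q).1 ≤ edist2 (prj P) (prj Q) := dist_le_edist2 _ _
        _ ≤ edist2 P Q := hp
        _ ≤ 3 * edist2 P Q := by linarith
    · have ha1 : |(prj P).1 - (prj Q).1| ≤ edist2 P Q :=
        le_trans (abs_fst_le_edist2 _ _) hp
      have ha2 : |(prj P).2 - (prj Q).2| ≤ edist2 P Q :=
        le_trans (abs_snd_le_edist2 _ _) hp
      have hb1 : |P.1 - Q.1| ≤ edist2 P Q := abs_fst_le_edist2 _ _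
      have hb2 : |P.2 - Q.2| ≤ edist2 P Q := abs_snd_le_edist2 _ _
      rw [Prod.dist_eq]
      show max (dist (rot90 (P - prj P)).1 (rot90 (Q - prj Q)).1)
          (dist (rot90 (P - prj P)).2 (rot90 (Q - prj Q)).2) ≤ 3 * edist2 P Q
      simp only [rot90, Prod.fst_sub, Prod.snd_sub, Real.dist_eq]
      rw [abs_le] at ha1 ha2 hb1 hb2
      refine max_le ?_ ?_ <;> (rw [abs_le]; exact ⟨by linarith, by linarith⟩)
  · -- left inverse
    exact hleft
  · -- right inverse
    intro s hs
    exact (hsurj s hs).2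
  · -- Ψ Lipschitz
    intro s hs s' hs' _
    set d := dist s s' with hddef
    have hd0 : 0 ≤ d := dist_nonneg
    have h11 : |s.1.1 - s'.1.1| ≤ d := by
      calc |s.1.1 - s'.1.1| = dist s.1.1 s'.1.1 := (Real.dist_eq _ _).symm
        _ ≤ dist s.1 s'.1 := by rw [Prod.dist_eq]; exact le_max_left _ _
        _ ≤ d := by rw [hddef, Prod.dist_eq]; exact le_max_left _ _
    have h12 : |s.1.2 - s'.1.2| ≤ d := by
      calc |s.1.2 - s'.1.2| = dist s.1.2 s'.1.2 := (Real.dist_eq _ _).symm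
        _ ≤ dist s.1 s'.1 := by rw [Prod.dist_eq]; exact le_max_right _ _
        _ ≤ d := by rw [hddef, Prod.dist_eq]; exact le_max_left _ _
    have h21 : |s.2.1 - s'.2.1| ≤ d := by
      calc |s.2.1 - s'.2.1| = dist s.2.1 s'.2.1 := (Real.dist_eq _ _).symm
        _ ≤ dist s.2 s'.2 := by rw [Prod.dist_eq]; exact le_max_left _ _
        _ ≤ d := by rw [hddef, Prod.dist_eq]; exact le_max_right _ _
    have h22 : |s.2.2 - s'.2.2| ≤ d := by
      calc |s.2.2 - s'.2.2| = dist s.2.2 s'.2.2 := (Real.dist_eq _ _).symm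
        _ ≤ dist s.2 s'.2 := by rw [Prod.dist_eq]; exact le_max_right _ _
        _ ≤ d := by rw [hddef, Prod.dist_eq]; exact le_max_right _ _
    apply edist2_le_of_sq_le (by positivity)
    show ((Ψ s).1 - (Ψ s').1) ^ 2 + ((Ψ s).2 - (Ψ s').2) ^ 2 ≤ (3 * d) ^ 2
    simp only [hΨdef]
    rw [abs_le] at h11 h12 h21 h22
    nlinarith [h11.1, h11.2, h12.1, h12.2, h21.1, h21.2, h22.1, h22.2, sq_nonneg d]
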